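/- Let (K, δ) be a nondegenerate differential field (for every nonzero f ∈ K{x} there is a ∈ K with f(a) ≠ 0) of characteristic p > 0. Then [K : C_K] is infinite. Conversely, if [K : C_K] is infinite then (K, δ) is nondegenerate. -/

import Mathlib

set_option synthInstance.maxHeartbeats 1000000
set_option maxHeartbeats 1000000
set_option maxRecDepth 8000

open MvPolynomial
noncomputable section
variable {K : Type*} [Field K]

/-- order of a differential polynomial -/
def ordOf (f : MvPolynomial ℕ K) : ℕ := f.vars.sup id

/-- separant -/
def sep (f : MvPolynomial ℕ K) : MvPolynomial ℕ K := pderiv (ordOf f) f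

/-- rank of a differential polynomial -/
def rankOf (f : MvPolynomial ℕ K) : ℕ × ℕ := (ordOf f, f.degreeOf (ordOf f))

/-- the differential ideal generated by f -/
def diffIdeal (D : Derivation ℤ (MvPolynomial ℕ K) (MvPolynomial ℕ K))
    (f : MvPolynomial ℕ K) : Ideal (MvPolynomial ℕ K) :=
  Ideal.span (Set.range fun n : ℕ => (⇑D)^[n] f)

/-- saturation I : s^∞ -/
def saturation {R : Type*} [CommRing R] (J : Ideal R) (s : R) : Ideal R where
  carrier := {h | ∃ m : ℕ, s ^ m * h ∈ J}
  zero_mem' := ⟨0, by simp⟩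
  add_mem' := by
    rintro a b ⟨m, hm⟩ ⟨n, hn⟩
    refine ⟨m + n, ?_⟩
    have h : s ^ (m + n) * (a + b) = s ^ n * (s ^ m * a) + s ^ m * (s ^ n * b) := by ring
    rw [h]
    exact J.add_mem (J.mul_mem_left _ hm) (J.mul_mem_left _ hn)
  smul_mem' := by
    rintro c a ⟨m, hm⟩
    refine ⟨m, ?_⟩
    have h : s ^ m * (c • a) = c * (s ^ m * a) := by rw [smul_eq_mul]; ring
    rw [h]
    exact J.mul_mem_left _ hm

/-- evaluation of a differential polynomial at a point of K -/
def evalD (δ : Derivation ℤ K K) (a : K) (f : MvPolynomial ℕ K) : K :=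
  MvPolynomial.eval (fun n => (⇑δ)^[n] a) f

/-- the field of constants -/
def constants (δ : Derivation ℤ K K) : Subfield K where
  carrier := {a | δ a = 0}
  zero_mem' := by simp
  one_mem' := by simp
  add_mem' := by intro a b ha hb; simp only [Set.mem_setOf_eq] at *; rw [map_add, ha, hb, add_zero]
  mul_mem' := by
    intro a b ha hb; simp only [Set.mem_setOf_eq] at *
    rw [Derivation.leibniz, ha, hb]; simp
  neg_mem' := by intro a ha; simp only [Set.mem_setOf_eq] at *; rw [map_neg, ha, neg_zero]
  inv_mem' := by
    intro a ha
    simp only [Set.mem_setOf_eq] at *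
    rcases eq_or_ne a 0 with rfl | h
    · simp
    · have h1 : a * a⁻¹ = 1 := mul_inv_cancel₀ h
      have h2 : δ (a * a⁻¹) = 0 := by rw [h1]; exact δ.map_one_eq_zero
      rw [Derivation.leibniz, ha] at h2
      simp only [smul_eq_mul, mul_zero, add_zero, zero_mul, smul_zero] at h2
      exact (mul_eq_zero.mp h2).resolve_left h

/-- the SDCF axiom scheme -/
def SDCFAx (δ : Derivation ℤ K K) : Prop :=
  ∀ f g : MvPolynomial ℕ K, f ≠ 0 → g ≠ 0 → sep f ≠ 0 → ordOf g < ordOf f →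
    ∃ a : K, evalD δ a f = 0 ∧ evalD δ a g ≠ 0

section AuxLemmas

variable {K : Type*} [Field K]

lemma iter_map_zero (δ : Derivation ℤ K K) (k : ℕ) : (⇑δ)^[k] (0 : K) = 0 :=
  Function.iterate_fixed (map_zero δ) k

lemma iter_sum_smul (δ : Derivation ℤ K K) {m : ℕ} (c b : Fin m → K)
    (hc : ∀ j, δ (c j) = 0) (k : ℕ) :
    (⇑δ)^[k] (∑ j, c j * b j) = ∑ j, c j * (⇑δ)^[k] (b j) := by
  induction k with
  | zero => simp
  | succ k ih =>
      rw [Function.iterate_succ_apply', ih, map_sum]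
      refine Finset.sum_congr rfl fun j _ => ?_
      rw [Derivation.leibniz, hc j, Function.iterate_succ_apply']
      simp [smul_eq_mul]

lemma wronsky (δ : Derivation ℤ K K) :
    ∀ (n : ℕ) (b l : Fin (n + 1) → K), l ≠ 0 →
      (∀ i : Fin (n + 1), ∑ j, l j * (⇑δ)^[(i : ℕ)] (b j) = 0) →
      ∃ c : Fin (n + 1) → K, c ≠ 0 ∧ (∀ j, δ (c j) = 0) ∧ ∑ j, c j * b j = 0 := by
  intro n
  induction n with
  | zero =>
      intro b l hl hrel
      have h0 : l 0 * b 0 = 0 := by simpa using hrel 0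
      have hl0 : l 0 ≠ 0 := by
        intro h; apply hl; funext j; fin_cases j; exact h
      have hb0 : b 0 = 0 := (mul_eq_zero.mp h0).resolve_left hl0
      exact ⟨fun _ => 1, by intro h; simpa using congrFun h 0,
        fun j => δ.map_one_eq_zero, by simp [hb0]⟩
  | succ n ih =>
      intro b l hl hrel
      by_cases hA : ∃ μ : Fin (n + 1) → K, μ ≠ 0 ∧
          ∀ i : Fin (n + 1), ∑ j, μ j * (⇑δ)^[(i : ℕ)] (b j.succ) = 0
      · obtain ⟨μ, hμ0, hμ⟩ := hA
        obtain ⟨c, hc0, hcδ, hcs⟩ := ih (fun j => b j.succ) μ hμ0 hμ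
        refine ⟨Fin.cons 0 c, ?_, ?_, ?_⟩
        · intro h; apply hc0; funext j; simpa using congrFun h j.succ
        · intro j
          refine Fin.cases ?_ (fun j => ?_) j
          · simp
          · simpa using hcδ j
        · rw [Fin.sum_univ_succ]; simpa using hcs
      · have hA' : ∀ μ : Fin (n + 1) → K,
            (∀ i : Fin (n + 1), ∑ j, μ j * (⇑δ)^[(i : ℕ)] (b j.succ) = 0) → μ = 0 := by
          intro μ hμ
          by_contra h
          exact hA ⟨μ, h, hμ⟩
        have hsplit : ∀ i : Fin (n + 2), l 0 * (⇑δ)^[(i : ℕ)] (b 0)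
            + ∑ j : Fin (n + 1), l j.succ * (⇑δ)^[(i : ℕ)] (b j.succ) = 0 := by
          intro i
          have h := hrel i
          rw [Fin.sum_univ_succ] at h
          exact h
        have hl0 : l 0 ≠ 0 := by
          intro h0
          have hz : (fun j : Fin (n + 1) => l j.succ) = 0 := by
            apply hA'
            intro i
            have h := hsplit i.castSucc
            rw [h0, zero_mul, zero_add] at h
            simpa using h
          apply hl
          funext j
          refine Fin.cases ?_ (fun j => ?_) j
          · exact h0
          · exact congrFun hz j
        set lam : Fin (n + 2) → K := fun j => (l 0)⁻¹ * l j with hlam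
        have hlam0 : lam 0 = 1 := inv_mul_cancel₀ hl0
        have hlrel : ∀ i : Fin (n + 2), ∑ j, lam j * (⇑δ)^[(i : ℕ)] (b j) = 0 := by
          intro i
          have h : ∑ j, lam j * (⇑δ)^[(i : ℕ)] (b j)
              = (l 0)⁻¹ * ∑ j, l j * (⇑δ)^[(i : ℕ)] (b j) := by
            rw [Finset.mul_sum]; exact Finset.sum_congr rfl fun j _ => by rw [hlam]; ring
          rw [h, hrel i, mul_zero]
        have key : ∀ i : Fin (n + 1),
            ∑ j : Fin (n + 2), δ (lam j) * (⇑δ)^[(i : ℕ)] (b j) = 0 := by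
          intro i
          have h1 : δ (∑ j, lam j * (⇑δ)^[((i.castSucc : Fin (n + 2)) : ℕ)] (b j)) = 0 := by
            rw [hlrel i.castSucc, map_zero]
          rw [map_sum] at h1
          have h2 : ∀ j : Fin (n + 2),
              δ (lam j * (⇑δ)^[((i.castSucc : Fin (n + 2)) : ℕ)] (b j))
              = δ (lam j) * (⇑δ)^[(i : ℕ)] (b j)
                + lam j * (⇑δ)^[((i.succ : Fin (n + 2)) : ℕ)] (b j) := by
            intro j
            rw [Derivation.leibniz]
            have e1 : ((i.castSucc : Fin (n + 2)) : ℕ) = (i : ℕ) := rfl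
            have e2 : ((i.succ : Fin (n + 2)) : ℕ) = (i : ℕ) + 1 := rfl
            rw [e1, e2, Function.iterate_succ_apply', smul_eq_mul, smul_eq_mul]
            ring
          rw [Finset.sum_congr rfl fun j _ => h2 j, Finset.sum_add_distrib,
            hlrel i.succ, add_zero] at h1
          exact h1
        have hμ0 : (fun j : Fin (n + 1) => δ (lam j.succ)) = 0 := by
          apply hA'
          intro i
          have h := key i
          rw [Fin.sum_univ_succ] at h
          have hδ0 : δ (lam 0) = 0 := by rw [hlam0]; exact δ.map_one_eq_zero
          rw [hδ0, zero_mul, zero_add] at h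
          exact h
        have hconst : ∀ j : Fin (n + 2), δ (lam j) = 0 := by
          intro j
          refine Fin.cases ?_ (fun j => ?_) j
          · rw [hlam0]; exact δ.map_one_eq_zero
          · exact congrFun hμ0 j
        refine ⟨lam, ?_, hconst, ?_⟩
        · intro h
          have h0 := congrFun h 0
          rw [hlam0] at h0
          exact one_ne_zero h0
        · simpa using hlrel 0

lemma exists_eval_ne_zero_subfield (S : Subfield K) (hS : (S : Set K).Infinite) :
    ∀ (m : ℕ) (g : MvPolynomial (Fin m) K), g ≠ 0 →
      ∃ c : Fin m → K, (∀ i, c i ∈ S) ∧ MvPolynomial.eval c g ≠ 0 := by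
  intro m
  induction m with
  | zero =>
      intro g hg
      refine ⟨fun _ => 0, fun i => i.elim0, ?_⟩
      rw [eq_C_of_isEmpty g, eval_C]
      intro h
      apply hg
      rw [eq_C_of_isEmpty g, h, map_zero]
  | succ m ihm =>
      intro g hg
      set q := MvPolynomial.finSuccEquiv K m g with hq
      have hq0 : q ≠ 0 := by
        intro h
        apply hg
        have h2 : (MvPolynomial.finSuccEquiv K m) g = (MvPolynomial.finSuccEquiv K m) 0 := by
          rw [map_zero, ← hq, h]
        exact (MvPolynomial.finSuccEquiv K m).injective h2
      have hl : q.leadingCoeff ≠ 0 := Polynomial.leadingCoeff_ne_zero.mpr hq0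
      obtain ⟨c, hcS, hc⟩ := ihm q.leadingCoeff hl
      have hmap : q.map (MvPolynomial.eval c) ≠ 0 := by
        intro h
        apply hc
        have h2 : Polynomial.coeff (q.map (MvPolynomial.eval c)) q.natDegree = 0 := by
          rw [h, Polynomial.coeff_zero]
        rw [Polynomial.coeff_map] at h2
        exact h2
      have hroots : {x : K | (q.map (MvPolynomial.eval c)).IsRoot x}.Finite :=
        Polynomial.finite_setOf_isRoot hmap
      obtain ⟨y, hy⟩ := (hS.diff hroots).nonempty
      refine ⟨Fin.cons y c, ?_, ?_⟩
      · intro i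
        refine Fin.cases ?_ (fun j => ?_) i
        · simpa using hy.1
        · simpa using hcS j
      · rw [MvPolynomial.eval_eq_eval_mv_eval']
        exact hy.2

end AuxLemmas

section MainAux

variable {K : Type*} [Field K]

lemma aeval_congr_vars {S : Type*} [CommSemiring S] [Algebra K S] {g₁ g₂ : ℕ → S}
    {p : MvPolynomial ℕ K} (h : ∀ i ∈ p.vars, g₁ i = g₂ i) :
    MvPolynomial.aeval g₁ p = MvPolynomial.aeval g₂ p := by
  have h2 := MvPolynomial.eval₂Hom_congr' (f₁ := algebraMap K S) (g₁ := g₁) (g₂ := g₂)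
    (p₁ := p) (p₂ := p) rfl (fun i h1 _ => h i h1) rfl
  simpa [MvPolynomial.aeval_def] using h2

end MainAux

/-- Seidenberg's characterisation: a differential field of characteristic `p > 0` is
nondegenerate (no nonzero differential polynomial vanishes identically on `K`) if and
only if `[K : C_K]` is infinite. -/
theorem stmt19 {K : Type*} [Field K] (p : ℕ) [Fact p.Prime] [CharP K p]
    (δ : Derivation ℤ K K) :
    (∀ f : MvPolynomial ℕ K, f ≠ 0 → ∃ a : K, evalD δ a f ≠ 0) ↔
      ¬ FiniteDimensional (constants δ) K := by
  classical
  constructor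
  · intro hnd hfd
    set n := Module.finrank (constants δ) K with hn
    set M : Matrix (Fin (n + 1)) (Fin (n + 1)) (MvPolynomial ℕ K) :=
      Matrix.of fun i j => X ((i : ℕ) + (j : ℕ)) with hM
    have hf : M.det ≠ 0 := by
      intro h0
      have h1 := congrArg (MvPolynomial.eval (fun k => if k = n then (1 : K) else 0)) h0
      rw [map_zero, RingHom.map_det, RingHom.mapMatrix_apply] at h1
      have h2 : M.map (MvPolynomial.eval (fun k => if k = n then (1 : K) else 0))
          = (1 : Matrix (Fin (n + 1)) (Fin (n + 1)) K).submatrix Fin.revPerm id := by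
        ext i j
        have hiff : (Fin.rev i = j) ↔ ((i : ℕ) + (j : ℕ) = n) := by
          rw [Fin.ext_iff, Fin.val_rev]; omega
        simp only [Matrix.map_apply, hM, Matrix.of_apply, eval_X,
          Matrix.submatrix_apply, Fin.revPerm_apply, id_eq, Matrix.one_apply]
        by_cases hc : (i : ℕ) + (j : ℕ) = n
        · rw [if_pos hc, if_pos (hiff.mpr hc)]
        · rw [if_neg hc, if_neg (fun hh => hc (hiff.mp hh))]
      rw [h2, Matrix.det_permute, Matrix.det_one, mul_one] at h1
      rcases Int.units_eq_one_or (Equiv.Perm.sign (Fin.revPerm : Equiv.Perm (Fin (n + 1))))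
        with h | h <;> rw [h] at h1 <;> simp at h1
    obtain ⟨a, ha⟩ := hnd M.det hf
    apply ha
    show MvPolynomial.eval (fun k => (⇑δ)^[k] a) M.det = 0
    rw [RingHom.map_det, ← Matrix.exists_mulVec_eq_zero_iff]
    have hni : ¬ LinearIndependent (constants δ) (fun j : Fin (n + 1) => (⇑δ)^[(j : ℕ)] a) := by
      intro hli
      have hcard := hli.fintype_card_le_finrank
      rw [Fintype.card_fin, ← hn] at hcard
      omega
    obtain ⟨g, hg, j0, hgj⟩ := Fintype.not_linearIndependent_iff.mp hni
    refine ⟨fun j => (g j : K), ?_, ?_⟩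
    · intro h
      exact hgj (Subtype.ext (congrFun h j0))
    · funext i
      have hz : ∑ j : Fin (n + 1), (g j : K) * (⇑δ)^[(j : ℕ)] a = 0 := hg
      have hstep : ∀ j : Fin (n + 1), (⇑δ)^[(i : ℕ) + (j : ℕ)] a
          = (⇑δ)^[(i : ℕ)] ((⇑δ)^[(j : ℕ)] a) := fun j =>
        Function.iterate_add_apply _ _ _ _
      show ∑ j, (M.map (MvPolynomial.eval fun k => (⇑δ)^[k] a)) i j * (g j : K) = 0
      have hMij : ∀ j : Fin (n + 1),
          (M.map (MvPolynomial.eval fun k => (⇑δ)^[k] a)) i j * (g j : K)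
          = (g j : K) * (⇑δ)^[(i : ℕ)] ((⇑δ)^[(j : ℕ)] a) := by
        intro j
        simp only [Matrix.map_apply, hM, Matrix.of_apply, eval_X]
        rw [hstep j, mul_comm]
      rw [Finset.sum_congr rfl fun j _ => hMij j,
        ← iter_sum_smul δ (fun j => (g j : K)) (fun j => (⇑δ)^[(j : ℕ)] a)
          (fun j => (g j).2) (i : ℕ), hz, iter_map_zero]
  · intro hinf f hf
    have hKinf : Infinite K := by
      by_contra h
      rw [not_infinite_iff_finite] at h
      have : Fintype K := Fintype.ofFinite K
      exact hinf ⟨⟨Finset.univ, by rw [Finset.coe_univ, Submodule.span_univ]⟩⟩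
    have hSinf : ((constants δ : Subfield K) : Set K).Infinite := by
      apply Set.infinite_of_injective_forall_mem (f := fun x : K => x ^ p)
      · have h := frobenius_inj K p
        intro x y hxy
        exact h (by rwa [frobenius_def, frobenius_def])
      · intro x
        show δ (x ^ p) = 0
        rw [Derivation.leibniz_pow]
        simp [nsmul_eq_mul, CharP.cast_eq_zero K p]
    set n := ordOf f with hn
    have hvars : ∀ k ∈ f.vars, k ≤ n := fun k hk => Finset.le_sup (f := id) hk
    have hbasisinf : (Module.Basis.ofVectorSpaceIndex (constants δ) K).Infinite := by
      by_contra hfin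
      rw [Set.not_infinite] at hfin
      have := hfin.to_subtype
      exact hinf (Module.Finite.of_basis (Module.Basis.ofVectorSpace (constants δ) K))
    have := hbasisinf.to_subtype
    set e : Fin (n + 1) → Module.Basis.ofVectorSpaceIndex (constants δ) K :=
      fun j => Infinite.natEmbedding _ (j : ℕ) with he
    have hei : Function.Injective e := by
      intro x y h
      exact Fin.val_injective ((Infinite.natEmbedding _).injective h)
    set b : Fin (n + 1) → K := fun j => (e j : K) with hb
    have hbli : LinearIndependent (constants δ) b :=
      (Module.Basis.ofVectorSpaceIndex.linearIndependent (constants δ) K).comp e hei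
    set W : Matrix (Fin (n + 1)) (Fin (n + 1)) K :=
      Matrix.of fun i j => (⇑δ)^[(i : ℕ)] (b j) with hW
    have hWdet : W.det ≠ 0 := by
      intro h0
      obtain ⟨v, hv0, hv⟩ := Matrix.exists_mulVec_eq_zero_iff.mpr h0
      have hrel : ∀ i : Fin (n + 1), ∑ j, v j * (⇑δ)^[(i : ℕ)] (b j) = 0 := by
        intro i
        have h : ∑ j, W i j * v j = 0 := congrFun hv i
        rw [← h]
        exact Finset.sum_congr rfl fun j _ => mul_comm _ _
      obtain ⟨c, hc0, hcδ, hcs⟩ := wronsky δ n b v hv0 hrel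
      have hz : ∑ j, (⟨c j, hcδ j⟩ : constants δ) • b j = 0 := hcs
      have hall := Fintype.linearIndependent_iff.mp hbli (fun j => ⟨c j, hcδ j⟩) hz
      apply hc0
      funext j
      exact Subtype.ext_iff.mp (hall j)
    have hWu : IsUnit W.det := isUnit_iff_ne_zero.mpr hWdet
    have hWinv : W * W⁻¹ = 1 := Matrix.mul_nonsing_inv W hWu
    set τ : ℕ → MvPolynomial (Fin (n + 1)) K :=
      fun k => ∑ j, MvPolynomial.C ((⇑δ)^[k] (b j)) * MvPolynomial.X j with hτ
    set σp : Fin (n + 1) → MvPolynomial ℕ K :=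
      fun j => ∑ i : Fin (n + 1), MvPolynomial.C (W⁻¹ j i) * MvPolynomial.X ((i : ℕ)) with hσ
    have hcomp : ∀ k : ℕ, k ≤ n → bind₁ σp (τ k) = X k := by
      intro k hk
      set k' : Fin (n + 1) := ⟨k, Nat.lt_succ_of_le hk⟩ with hk'
      have h1 : τ k = ∑ j, C (W k' j) * X j := rfl
      rw [h1, map_sum]
      have h2 : ∀ j, bind₁ σp (C (W k' j) * X j)
          = ∑ i : Fin (n + 1), C (W k' j * W⁻¹ j i) * X ((i : ℕ)) := by
        intro j
        rw [map_mul, bind₁_C_right, bind₁_X_right, hσ, Finset.mul_sum]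
        exact Finset.sum_congr rfl fun i _ => by rw [← mul_assoc, ← C_mul]
      rw [Finset.sum_congr rfl fun j _ => h2 j, Finset.sum_comm]
      have h3 : ∀ i : Fin (n + 1), (∑ j, C (W k' j * W⁻¹ j i) * X ((i : ℕ)))
          = C ((W * W⁻¹) k' i) * X ((i : ℕ)) := by
        intro i
        rw [← Finset.sum_mul, ← map_sum, Matrix.mul_apply]
      rw [Finset.sum_congr rfl fun i _ => h3 i, hWinv]
      rw [Finset.sum_eq_single k']
      · rw [Matrix.one_apply_eq, map_one, one_mul]
      · intro i _ hik
        rw [Matrix.one_apply_ne' hik, map_zero, zero_mul]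
      · intro h; exact absurd (Finset.mem_univ k') h
    have hgf : bind₁ σp (bind₁ τ f) = f := by
      rw [bind₁_bind₁]
      have hcongr : MvPolynomial.aeval (fun i => bind₁ σp (τ i)) f
          = MvPolynomial.aeval MvPolynomial.X f :=
        aeval_congr_vars (fun i hi => hcomp i (hvars i hi))
      calc bind₁ (fun i => bind₁ σp (τ i)) f
          = MvPolynomial.aeval MvPolynomial.X f := hcongr
        _ = f := by rw [← MvPolynomial.bind₁, bind₁_X_left]; rfl
    have hg : bind₁ τ f ≠ 0 := by
      intro h
      apply hf
      rw [← hgf, h, map_zero]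
    obtain ⟨c, hcS, hc⟩ := exists_eval_ne_zero_subfield (constants δ) hSinf (n + 1)
      (bind₁ τ f) hg
    refine ⟨∑ j, c j * b j, ?_⟩
    show MvPolynomial.eval (fun k => (⇑δ)^[k] (∑ j, c j * b j)) f ≠ 0
    have hjet : (fun k => (⇑δ)^[k] (∑ j, c j * b j))
        = fun k => ∑ j, c j * (⇑δ)^[k] (b j) := by
      funext k
      exact iter_sum_smul δ c b (fun j => hcS j) k
    have heval : MvPolynomial.eval c (bind₁ τ f)
        = MvPolynomial.eval (fun k => ∑ j, c j * (⇑δ)^[k] (b j)) f := by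
      show MvPolynomial.aeval c (bind₁ τ f) = _
      rw [aeval_bind₁]
      have hpt : (fun k => MvPolynomial.eval c (τ k))
          = fun k => ∑ j, c j * (⇑δ)^[k] (b j) := by
        funext k
        rw [hτ]
        show MvPolynomial.eval c (∑ j, MvPolynomial.C ((⇑δ)^[k] (b j)) * MvPolynomial.X j) = _
        rw [map_sum]
        exact Finset.sum_congr rfl fun j _ => by
          rw [map_mul, eval_C, eval_X, mul_comm]
      show MvPolynomial.eval (fun k => MvPolynomial.eval c (τ k)) f = _
      rw [hpt]
    rw [hjet, ← heval]
    exact hc
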